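/- Let 0 < λ < μ and a > 0. Then ∫_0^∞ ( (μ − μ e^{(λ−μ)x}) / (μ − λ e^{(λ−μ)x}) ) e^{-ax} dx = 1/a − (μ/λ − 1) Σ_{k=1}^∞ (λ/μ)^k / ( k(μ − λ) + a ). -/

import Mathlib

open MeasureTheory Real Set

private lemma exp_int_aux (b : ℝ) (hb : 0 < b) :
    ∫ x in Set.Ioi (0:ℝ), Real.exp (-(b * x)) = 1 / b := by
  have h := MeasureTheory.integral_comp_mul_left_Ioi (fun x => Real.exp (-x)) 0 hb
  simp only [mul_zero, integral_exp_neg_Ioi_zero, smul_eq_mul, mul_one] at h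
  rw [show (fun x => Real.exp (-(b*x))) = fun x => Real.exp (-(b*x)) from rfl]
  simpa [one_div] using h

theorem stmt8 (lam mu a : ℝ) (hlam : 0 < lam) (hmu : lam < mu) (ha : 0 < a) :
    ∫ x in Set.Ioi (0 : ℝ),
        (mu - mu * Real.exp ((lam - mu) * x)) / (mu - lam * Real.exp ((lam - mu) * x)) *
          Real.exp (-a * x)
      = 1 / a - (mu / lam - 1) *
          ∑' k : ℕ, (lam / mu) ^ (k + 1) / (((k : ℝ) + 1) * (mu - lam) + a) := by
  have hmu0 : 0 < mu := hlam.trans hmu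
  have hβ : 0 < mu - lam := sub_pos.mpr hmu
  set r : ℝ := lam / mu with hr
  have hr0 : 0 < r := div_pos hlam hmu0
  have hr1 : r < 1 := (div_lt_one hmu0).mpr hmu
  set F : ℕ → ℝ → ℝ := fun k x =>
    (lam / mu) ^ (k + 1) * Real.exp (-((((k : ℝ) + 1) * (mu - lam) + a) * x)) with hF
  -- each F k integrable
  have hbk : ∀ k : ℕ, 0 < ((k : ℝ) + 1) * (mu - lam) + a := by
    intro k
    have : (0:ℝ) ≤ (k : ℝ) := Nat.cast_nonneg k
    positivity
  have hFint : ∀ k : ℕ, IntegrableOn (F k) (Ioi 0) := by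
    intro k
    apply Integrable.const_mul
    have h := exp_neg_integrableOn_Ioi 0 (hbk k)
    simp only [neg_mul] at h
    exact h
  have hFintval : ∀ k : ℕ, ∫ x in Ioi (0:ℝ), F k x
      = (lam / mu) ^ (k + 1) / (((k : ℝ) + 1) * (mu - lam) + a) := by
    intro k
    show ∫ x in Ioi (0:ℝ), (lam / mu) ^ (k + 1) *
        Real.exp (-((((k : ℝ) + 1) * (mu - lam) + a) * x)) = _
    rw [MeasureTheory.integral_const_mul, exp_int_aux _ (hbk k)]
    ring
  -- pointwise facts
  have hEfacts : ∀ x : ℝ, 0 < x →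
      0 < Real.exp ((lam - mu) * x) ∧ Real.exp ((lam - mu) * x) < 1 := by
    intro x hx
    exact ⟨Real.exp_pos _, Real.exp_lt_one_iff.mpr (by nlinarith)⟩
  -- tsum closed form on Ioi 0
  have htsum : ∀ x : ℝ, 0 < x →
      (∑' k : ℕ, F k x) = r * Real.exp ((lam - mu) * x) *
        (1 - r * Real.exp ((lam - mu) * x))⁻¹ * Real.exp (-(a * x)) := by
    intro x hx
    obtain ⟨hE0, hE1⟩ := hEfacts x hx
    set E := Real.exp ((lam - mu) * x) with hEdef
    have hterm : ∀ k : ℕ, F k x = (r * E) ^ (k + 1) * Real.exp (-(a * x)) := by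
      intro k
      show (lam / mu) ^ (k + 1) *
          Real.exp (-((((k : ℝ) + 1) * (mu - lam) + a) * x)) = _
      have h1 : (-((((k : ℝ) + 1) * (mu - lam) + a) * x))
          = ((k + 1 : ℕ) : ℝ) * ((lam - mu) * x) + (-(a * x)) := by push_cast; ring
      rw [h1, Real.exp_add, Real.exp_nat_mul, mul_pow, hr]
      ring
    have hrE1 : r * E < 1 := by
      calc r * E < r * 1 := by nlinarith
        _ < 1 := by linarith
    have hrE0 : 0 ≤ r * E := by positivity
    calc (∑' k : ℕ, F k x) = ∑' k : ℕ, (r * E) ^ (k + 1) * Real.exp (-(a * x)) := by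
          exact tsum_congr fun k => hterm k
      _ = (∑' k : ℕ, (r * E) ^ (k + 1)) * Real.exp (-(a * x)) := tsum_mul_right
      _ = ((r * E) * ∑' k : ℕ, (r * E) ^ k) * Real.exp (-(a * x)) := by
          rw [← tsum_mul_left]
          congr 1
          exact tsum_congr fun k => by ring
      _ = r * E * (1 - r * E)⁻¹ * Real.exp (-(a * x)) := by
          rw [tsum_geometric_of_lt_one hrE0 hrE1]
    done
  -- pointwise identity
  have hkey : ∀ x ∈ Ioi (0:ℝ),
      (mu - mu * Real.exp ((lam - mu) * x)) / (mu - lam * Real.exp ((lam - mu) * x)) *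
          Real.exp (-a * x)
      = Real.exp (-(a * x)) - (mu / lam - 1) * ∑' k : ℕ, F k x := by
    intro x hx
    rw [htsum x hx]
    obtain ⟨hE0, hE1⟩ := hEfacts x hx
    set E := Real.exp ((lam - mu) * x) with hEdef
    have hden : 0 < mu - lam * E := by nlinarith
    have hden2 : (1 : ℝ) - r * E ≠ 0 := by
      have : r * E < 1 := by
        calc r * E < r * 1 := by nlinarith
          _ < 1 := by linarith
      linarith
    rw [neg_mul, hr]
    field_simp [hden.ne', hlam.ne', hmu0.ne']
    ring_nf
    have hd : mu - E * lam ≠ 0 := by nlinarith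
    field_simp [hd]
    ring
  -- the tsum function is integrable
  have hcont : ContinuousOn (fun x : ℝ => r * Real.exp ((lam - mu) * x) *
      (1 - r * Real.exp ((lam - mu) * x))⁻¹ * Real.exp (-(a * x))) (Ioi 0) := by
    apply ContinuousOn.mul
    apply ContinuousOn.mul
    · fun_prop
    · apply ContinuousOn.inv₀
      · fun_prop
      · intro x hx
        obtain ⟨hE0, hE1⟩ := hEfacts x hx
        have : r * Real.exp ((lam - mu) * x) < 1 := by nlinarith
        linarith
    · fun_prop
  have hTint : IntegrableOn (fun x => ∑' k : ℕ, F k x) (Ioi 0) := by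
    refine IntegrableOn.congr_fun ?_ (fun x hx => (htsum x hx).symm) measurableSet_Ioi
    · exact Integrable.mono
        ((exp_neg_integrableOn_Ioi 0 ha).const_mul (r / (1 - r)))
        (hcont.aestronglyMeasurable measurableSet_Ioi)
        (by
          filter_upwards [ae_restrict_mem measurableSet_Ioi] with x hx
          obtain ⟨hE0, hE1⟩ := hEfacts x hx
          set E := Real.exp ((lam - mu) * x)
          have hrE1 : r * E < 1 := by nlinarith
          have h1 : (0:ℝ) < 1 - r * E := by linarith
          have h2 : (0:ℝ) < 1 - r := by linarith
          have hnn1 : (0:ℝ) ≤ r * E * (1 - r * E)⁻¹ * Real.exp (-(a * x)) :=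
            mul_nonneg (mul_nonneg (by positivity) (inv_nonneg.mpr h1.le))
              (Real.exp_nonneg _)
          rw [Real.norm_of_nonneg hnn1, Real.norm_of_nonneg (by positivity)]
          have h3 : r * E * (1 - r * E)⁻¹ ≤ r / (1 - r) := by
            rw [show r * E * (1 - r * E)⁻¹ = r * E / (1 - r * E) from rfl]
            exact div_le_div₀ hr0.le (by nlinarith) h2 (by nlinarith)
          calc r * E * (1 - r * E)⁻¹ * Real.exp (-(a * x))
              ≤ r / (1 - r) * Real.exp (-(a * x)) :=
                mul_le_mul_of_nonneg_right h3 (Real.exp_nonneg _)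
            _ = r / (1 - r) * Real.exp (-a * x) := by rw [neg_mul])
  -- swap integral and sum
  have hswap : ∫ x in Ioi (0:ℝ), (∑' k : ℕ, F k x)
      = ∑' k : ℕ, (lam / mu) ^ (k + 1) / (((k : ℝ) + 1) * (mu - lam) + a) := by
    rw [← MeasureTheory.integral_tsum_of_summable_integral_norm hFint]
    · exact tsum_congr hFintval
    · apply Summable.of_nonneg_of_le (fun k => ?_) (fun k => ?_)
        (((summable_geometric_of_lt_one hr0.le hr1).mul_left (r / a)))
      · positivity
      · have h1 : ∫ x in Ioi (0:ℝ), ‖F k x‖ = ∫ x in Ioi (0:ℝ), F k x := by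
          congr 1
          funext x
          exact Real.norm_of_nonneg (by rw [hF]; positivity)
        rw [h1, hFintval k]
        rw [div_le_iff₀ (hbk k)]
        have hk : a ≤ ((k : ℝ) + 1) * (mu - lam) + a := by nlinarith [Nat.cast_nonneg (α := ℝ) k]
        calc (lam / mu) ^ (k + 1) = r / a * r ^ k * a := by
              rw [hr]; field_simp [hmu0.ne', ha.ne']; ring_nf; field_simp
          _ ≤ r / a * r ^ k * (((k : ℝ) + 1) * (mu - lam) + a) := by
              have : (0:ℝ) ≤ r / a * r ^ k := by positivity
              nlinarith
  -- finish
  rw [MeasureTheory.setIntegral_congr_fun measurableSet_Ioi hkey]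
  rw [MeasureTheory.integral_sub (by have h := exp_neg_integrableOn_Ioi 0 ha; simp only [neg_mul] at h ⊢; exact h)
    (hTint.const_mul _)]
  rw [MeasureTheory.integral_const_mul, exp_int_aux a ha, hswap]
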